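/- For every n ≥ 1, the product over all b with 0 ≤ b < 2^n of the rationals 3^(m(b,n))/2^n equals (3/4)^(n * 2^(n-1)). -/

import Mathlib

def T (N : ℕ) : ℕ := if N % 2 = 0 then N / 2 else (3 * N + 1) / 2

def m (b n : ℕ) : ℕ := ((Finset.range n).filter (fun k => Odd (T^[k] b))).card

lemma Tadd (b c t : ℕ) : ∃ d, T (b + 2^(t+1) * c) = T b + 2^t * d := by
  rcases Nat.even_or_odd b with hb | hb
  · refine ⟨c, ?_⟩
    have hb' : b % 2 = 0 := Nat.even_iff.mp hb
    have h2 : 2^(t+1) * c = 2 * (2^t * c) := by ring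
    rw [h2]
    generalize 2^t * c = y
    have h1 : (b + 2*y) % 2 = 0 := by omega
    simp only [T, h1, hb', if_true]
    omega
  · refine ⟨3*c, ?_⟩
    have hb' : b % 2 = 1 := Nat.odd_iff.mp hb
    have key : 2^t * (3*c) = 3 * (2^t * c) := by ring
    have h2 : 2^(t+1) * c = 2 * (2^t * c) := by ring
    rw [h2, key]
    generalize 2^t * c = y
    have h1 : (b + 2*y) % 2 = 1 := by omega
    simp only [T, h1, hb']
    norm_num
    omega

lemma Titer (j : ℕ) : ∀ s b c, ∃ d, T^[j] (b + 2^(j+s) * c) = T^[j] b + 2^s * d := by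
  induction j with
  | zero => intro s b c; exact ⟨c, by simp⟩
  | succ j ih =>
    intro s b c
    have heq : j + 1 + s = (j + s) + 1 := by ring
    obtain ⟨d, hd⟩ := Tadd b c (j + s)
    obtain ⟨e, he⟩ := ih s (T b) d
    refine ⟨e, ?_⟩
    rw [Function.iterate_succ_apply, Function.iterate_succ_apply, heq, hd, he]

lemma m_mod (b N : ℕ) : m b N = m (b % 2^N) N := by
  unfold m
  congr 1
  apply Finset.filter_congr
  intro j hj
  simp only [Finset.mem_range] at hj
  have hb : b = b % 2^N + 2^(j + (N - j)) * (b / 2^N) := by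
    rw [show j + (N - j) = N by omega]
    exact (Nat.mod_add_div b (2^N)).symm
  obtain ⟨d, hd⟩ := Titer j (N - j) (b % 2^N) (b / 2^N)
  rw [← hb] at hd
  obtain ⟨s, hs⟩ : ∃ s, N - j = s + 1 := ⟨N - j - 1, by omega⟩
  have heven : 2^(N-j) * d = 2 * (2^s * d) := by rw [hs, pow_succ]; ring
  rw [heven] at hd
  simp only [hd, Nat.odd_iff]
  omega

lemma m_succ (b k : ℕ) : m b (k+1) = m (T b) k + (if Odd b then 1 else 0) := by
  unfold m
  rw [Finset.card_filter, Finset.card_filter, Finset.sum_range_succ']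
  simp only [Function.iterate_succ_apply, Function.iterate_zero_apply]
  rfl

lemma sum_double (M : ℕ) (f : ℕ → ℕ) :
    ∑ b ∈ Finset.range (2 * M), f b = ∑ a ∈ Finset.range M, (f (2*a) + f (2*a+1)) := by
  induction M with
  | zero => simp
  | succ M ih =>
    rw [show 2 * (M+1) = (2*M) + 1 + 1 by ring, Finset.sum_range_succ, Finset.sum_range_succ,
      Finset.sum_range_succ, ih]
    ring

lemma sum_odd_indicator (M : ℕ) :
    ∑ b ∈ Finset.range (2 * M), (if Odd b then 1 else 0) = M := by
  rw [sum_double]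
  have h : ∀ a : ℕ, (if Odd (2*a) then 1 else 0) + (if Odd (2*a+1) then 1 else 0) = 1 := by
    intro a
    have h1 : ¬ Odd (2*a) := by simp [Nat.odd_iff, Nat.mul_mod_right]
    have h2 : Odd (2*a+1) := ⟨a, by ring⟩
    simp [h1, h2]
  simp only [h, Finset.sum_const, Finset.card_range, smul_eq_mul, mul_one]

lemma sum_reindex (M : ℕ) (hM : Nat.Coprime 3 M) (g : ℕ → ℕ) :
    ∑ a ∈ Finset.range M, g ((3*a+2) % M) = ∑ c ∈ Finset.range M, g c := by
  rcases Nat.eq_zero_or_pos M with h0 | hpos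
  · simp [h0]
  have hinj : ∀ x ∈ Finset.range M, ∀ y ∈ Finset.range M,
      (3*x+2) % M = (3*y+2) % M → x = y := by
    intro a ha a' ha' h
    simp only [Finset.mem_range] at ha ha'
    have h1 : 3*a + 2 ≡ 3*a' + 2 [MOD M] := h
    have h2 : 3*a ≡ 3*a' [MOD M] := Nat.ModEq.add_right_cancel' 2 h1
    have h3 : a ≡ a' [MOD M] := h2.cancel_left_of_coprime (Nat.coprime_comm.mp hM)
    exact h3.eq_of_lt_of_lt ha ha'
  rw [← Finset.sum_image hinj]
  congr 1
  apply Finset.eq_of_subset_of_card_le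
  · intro x hx
    simp only [Finset.mem_image, Finset.mem_range] at hx ⊢
    obtain ⟨a, _, ha⟩ := hx
    have := Nat.mod_lt (3*a+2) hpos
    omega
  · rw [Finset.card_image_of_injOn (fun x hx y hy => hinj x (by simpa using hx) y (by simpa using hy))]

lemma T_even (a : ℕ) : T (2*a) = a := by simp [T, Nat.mul_div_cancel_left, Nat.mul_mod_right]

lemma T_odd (a : ℕ) : T (2*a+1) = 3*a+2 := by
  simp only [T]
  have h : (2*a+1) % 2 = 1 := by omega
  rw [h]
  norm_num
  omega

lemma Ssum : ∀ n, ∑ b ∈ Finset.range (2^(n+1)), m b (n+1) = (n+1) * 2^n := by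
  intro n
  induction n with
  | zero => decide
  | succ n ih =>
    have hcop : Nat.Coprime 3 (2^(n+1)) := Nat.Coprime.pow_right _ (by decide)
    calc ∑ b ∈ Finset.range (2^(n+2)), m b (n+2)
        = ∑ b ∈ Finset.range (2 * 2^(n+1)), (m (T b) (n+1) + (if Odd b then 1 else 0)) := by
          rw [show (2:ℕ)^(n+2) = 2 * 2^(n+1) by ring]
          exact Finset.sum_congr rfl (fun b _ => m_succ b (n+1))
      _ = ∑ b ∈ Finset.range (2 * 2^(n+1)), m (T b) (n+1) + 2^(n+1) := by
          rw [Finset.sum_add_distrib, sum_odd_indicator]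
      _ = ∑ a ∈ Finset.range (2^(n+1)), (m a (n+1) + m ((3*a+2) % 2^(n+1)) (n+1)) + 2^(n+1) := by
          rw [sum_double]
          congr 1
          apply Finset.sum_congr rfl
          intro a _
          rw [T_even, T_odd, ← m_mod]
      _ = (n+1) * 2^n + (n+1) * 2^n + 2^(n+1) := by
          rw [Finset.sum_add_distrib, ih]
          have h := sum_reindex (2^(n+1)) hcop (fun c => m c (n+1))
          rw [h, ih]
      _ = (n+2) * 2^(n+1) := by ring

theorem stmt6 : ∀ n ≥ 1,
    ∏ b ∈ Finset.range (2 ^ n), ((3 : ℚ) ^ m b n / 2 ^ n) = (3 / 4 : ℚ) ^ (n * 2 ^ (n - 1)) := by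
  intro n hn
  obtain ⟨k, rfl⟩ : ∃ k, n = k + 1 := ⟨n - 1, by omega⟩
  simp only [Nat.add_sub_cancel]
  rw [Finset.prod_div_distrib, Finset.prod_pow_eq_pow_sum, Ssum, Finset.prod_const,
    Finset.card_range, div_pow]
  have h4 : (4:ℚ) = 2^2 := by norm_num
  rw [h4, ← pow_mul, ← pow_mul, show (k+1)*2^(k+1) = 2*((k+1)*2^k) from by ring]
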